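/- Let T_l be any l×l matrix over GF(2) and let T_L = T₂⊗T_l = [[T_l,0],[T_l,T_l]]. Then for every 0 ≤ i ≤ l−1 and every 0 ≤ w ≤ 2l, the number of weight-w erasure patterns killing bit channel l+i of T_L satisfies E_{l+i,w}(T_L) = Σ_{w₀=0}^{⌊w/2⌋} C(l−w₀, w−2w₀) · 2^{w−2w₀} · E_{i,w₀}(T_l), where C(a,b) denotes the binomial coefficient (with C(a,b) = 0 whenever b > a). -/

import Mathlib

open Matrix

/-- Kronecker product of square matrices over GF(2), with row/column index
pairs ordered lexicographically: `(a, b)` corresponds to index `a * n + b`. -/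
noncomputable def kron {m n : ℕ} (A : Matrix (Fin m) (Fin m) (ZMod 2))
    (B : Matrix (Fin n) (Fin n) (ZMod 2)) :
    Matrix (Fin (m * n)) (Fin (m * n)) (ZMod 2) :=
  Matrix.reindex finProdFinEquiv finProdFinEquiv (Matrix.kroneckerMap (· * ·) A B)

/-- The matrix `T₂ = [[1,0],[1,1]]` over GF(2). -/
def Ttwo : Matrix (Fin 2) (Fin 2) (ZMod 2) := !![1, 0; 1, 1]

/-- An erasure pattern `e : Fin l → Bool` (where `e j = true` means the `j`-th
copy of the channel is erased) kills bit channel `i` of the kernel `T` if the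
vector `Y_{l-i} = (1,0,…,0)ᵀ` of length `l - i` (indexed by rows `r` with
`i ≤ r`) is not in the `𝔽₂`-linear span of the columns of the submatrix
`T[i : l-1]` at the non-erased positions. -/
def Kills {l : ℕ} (T : Matrix (Fin l) (Fin l) (ZMod 2)) (i : Fin l)
    (e : Fin l → Bool) : Prop :=
  (fun r : {r : Fin l // i ≤ r} => if r.val = i then (1 : ZMod 2) else 0) ∉
    Submodule.span (ZMod 2)
      {w : {r : Fin l // i ≤ r} → ZMod 2 | ∃ j : Fin l, e j = false ∧ w = fun r => T r.val j}

/-- `E_{i,w}(T)`: the number of erasure patterns of weight `w` (i.e. with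
exactly `w` erased positions) that kill bit channel `i` of `T`. -/
noncomputable def numKilling {l : ℕ} (T : Matrix (Fin l) (Fin l) (ZMod 2))
    (i : Fin l) (w : ℕ) : ℕ :=
  Nat.card {e : Fin l → Bool //
    (Finset.univ.filter fun j => e j = true).card = w ∧ Kills T i e}

/-- The erasure polynomial `p_i^T(z) = Σ_w E_{i,w}(T) z^w (1-z)^{l-w} ∈ ℤ[z]`
of bit channel `i` of `T`. -/
noncomputable def erasurePoly {l : ℕ} (T : Matrix (Fin l) (Fin l) (ZMod 2))
    (i : Fin l) : Polynomial ℤ :=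
  ∑ w ∈ Finset.range (l + 1),
    (numKilling T i w : Polynomial ℤ) * Polynomial.X ^ w * (1 - Polynomial.X) ^ (l - w)


open Finset

variable {l : ℕ}

def wtv {l : ℕ} (e : Fin l → Bool) : ℕ := (Finset.univ.filter fun j => e j = true).card

lemma wtv_eq_sum (e : Fin l → Bool) : wtv e = ∑ j, (e j).toNat := by
  unfold wtv
  rw [Finset.card_filter]
  exact Finset.sum_congr rfl fun j _ => by cases e j <;> simp

lemma card_bool_pred (p : Bool → Prop) [DecidablePred p] :
    Fintype.card {b : Bool // p b} = (if p false then 1 else 0) + (if p true then 1 else 0) := by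
  rw [Fintype.card_subtype]
  rw [show (Finset.univ : Finset Bool) = {false, true} by decide]
  rw [Finset.filter_insert]
  by_cases h1 : p false <;> by_cases h2 : p true <;>
    simp [h1, h2, Finset.filter_singleton]

lemma card_s_compat (g d : Fin l → Bool) (hcompat : ∀ j, g j = true → d j = false) :
    Fintype.card {s : Fin l → Bool // ∀ j, (s j && !(d j)) = g j} = 2 ^ wtv d := by
  rw [Fintype.card_congr (Equiv.subtypePiEquivPi (p := fun j (b : Bool) => (b && !(d j)) = g j))]
  rw [Fintype.card_pi]
  have key : ∀ j, Fintype.card {b : Bool // (b && !(d j)) = g j} = if d j = true then 2 else 1 := by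
    intro j
    have hc := hcompat j
    rw [card_bool_pred]
    cases hd : d j <;> cases hg : g j <;> simp_all
  calc ∏ j, Fintype.card {b : Bool // (b && !(d j)) = g j}
      = ∏ j, (if d j = true then 2 else 1) := Finset.prod_congr rfl fun j _ => key j
    _ = 2 ^ wtv d := by
        rw [← Finset.prod_filter_mul_prod_filter_not Finset.univ (fun j => d j = true)]
        rw [Finset.prod_congr rfl (fun x hx => if_pos (Finset.mem_filter.1 hx).2),
          Finset.prod_congr rfl (fun x hx => if_neg (Finset.mem_filter.1 hx).2),
          Finset.prod_const, Finset.prod_const, one_pow, mul_one]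
        rfl

lemma card_s_incompat (g d : Fin l → Bool) (h : ∃ j, g j = true ∧ d j = true) :
    Fintype.card {s : Fin l → Bool // ∀ j, (s j && !(d j)) = g j} = 0 := by
  obtain ⟨j, hg, hd⟩ := h
  refine Fintype.card_eq_zero_iff.mpr ⟨fun ⟨s, hs⟩ => ?_⟩
  have := hs j
  simp [hd, hg] at this

lemma card_d (g : Fin l → Bool) (k : ℕ) :
    (Finset.univ.filter fun d : Fin l → Bool =>
      wtv d = k ∧ ∀ j, g j = true → d j = false).card = (l - wtv g).choose k := by
  classical
  set S : Finset (Fin l) := Finset.univ.filter fun j => g j = false with hS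
  have hcard : S.card = l - wtv g := by
    have h1 := Finset.card_filter_add_card_filter_not
      (s := (Finset.univ : Finset (Fin l))) (p := fun j => g j = true)
    have h2 : (Finset.univ.filter fun j => ¬ g j = true) = S := by
      apply Finset.filter_congr
      intro x _
      simp
    rw [h2] at h1
    have : wtv g + S.card = l := by simpa [wtv] using h1
    omega
  rw [← hcard, ← Finset.card_powersetCard]
  apply Finset.card_bij' (fun d _ => Finset.univ.filter fun j => d j = true)
    (fun A _ => fun x => decide (x ∈ A))
  case hi =>
    intro d hd
    rw [Finset.mem_filter] at hd
    rw [Finset.mem_powersetCard]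
    refine ⟨fun x hx => ?_, hd.2.1⟩
    rw [Finset.mem_filter] at hx
    have hgx : g x = false := by
      cases hgx : g x
      · rfl
      · rw [hd.2.2 x hgx] at hx
        exact absurd hx.2 (by simp)
    simp [hS, hgx]
  case hj =>
    intro A hA
    rw [Finset.mem_powersetCard] at hA
    rw [Finset.mem_filter]
    refine ⟨Finset.mem_univ _, ?_, ?_⟩
    · rw [← hA.2]
      unfold wtv
      congr 1
      ext x
      simp
    · intro x hx
      simp only [decide_eq_false_iff_not]
      intro hmem
      have := hA.1 hmem
      simp [hS] at this
      rw [hx] at this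
      exact absurd this (by simp)
  case left_inv =>
    intro d _
    funext x
    by_cases h : d x = true <;> simp [h]
  case right_inv =>
    intro A _
    ext x
    simp

lemma card_mu_fiber (g d : Fin l → Bool) :
    (Finset.univ.filter fun sd : (Fin l → Bool) × (Fin l → Bool) =>
        (fun j => sd.1 j && !(sd.2 j)) = g ∧ sd.2 = d).card
      = Fintype.card {s : Fin l → Bool // ∀ j, (s j && !(d j)) = g j} := by
  classical
  rw [Fintype.card_subtype]
  apply Finset.card_nbij' (i := Prod.fst) (j := fun s => (s, d))
  · intro sd hsd
    rw [Finset.mem_coe, Finset.mem_filter] at hsd ⊢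
    obtain ⟨-, h1, h2⟩ := hsd
    exact ⟨Finset.mem_univ _, fun j => by rw [← h2]; exact congrFun h1 j⟩
  · intro s hs
    rw [Finset.mem_coe, Finset.mem_filter] at hs ⊢
    exact ⟨Finset.mem_univ _, funext fun j => hs.2 j, rfl⟩
  · intro sd hsd
    rw [Finset.mem_coe, Finset.mem_filter] at hsd
    rw [← hsd.2.2]
  · intro s _
    rfl

lemma main_count (P : (Fin l → Bool) → Prop) [DecidablePred P] (w : ℕ) (hw : w ≤ 2 * l) :
    (Finset.univ.filter fun sd : (Fin l → Bool) × (Fin l → Bool) =>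
        2 * wtv (fun j => sd.1 j && !(sd.2 j)) + wtv sd.2 = w ∧
          P (fun j => sd.1 j && !(sd.2 j))).card
      = ∑ w₀ ∈ Finset.range (w / 2 + 1),
          Nat.choose (l - w₀) (w - 2 * w₀) * 2 ^ (w - 2 * w₀) *
            (Finset.univ.filter fun g => wtv g = w₀ ∧ P g).card := by
  classical
  rw [Finset.card_eq_sum_card_fiberwise
    (f := fun sd : (Fin l → Bool) × (Fin l → Bool) => ((fun j => sd.1 j && !(sd.2 j)), sd.2))
    (t := Finset.univ) (fun _ _ => Finset.mem_univ _)]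
  rw [Fintype.sum_prod_type]
  have inner : ∀ g d : Fin l → Bool,
      ((Finset.univ.filter fun sd : (Fin l → Bool) × (Fin l → Bool) =>
          2 * wtv (fun j => sd.1 j && !(sd.2 j)) + wtv sd.2 = w ∧
            P (fun j => sd.1 j && !(sd.2 j))).filter
        (fun sd => ((fun j => sd.1 j && !(sd.2 j)), sd.2) = (g, d))).card
      = if 2 * wtv g + wtv d = w ∧ P g then
          (if ∀ j, g j = true → d j = false then 2 ^ wtv d else 0) else 0 := by
    intro g d
    rw [Finset.filter_filter]
    by_cases hc : 2 * wtv g + wtv d = w ∧ P g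
    · rw [if_pos hc]
      have heq : (Finset.univ.filter fun sd : (Fin l → Bool) × (Fin l → Bool) =>
          (2 * wtv (fun j => sd.1 j && !(sd.2 j)) + wtv sd.2 = w ∧
            P (fun j => sd.1 j && !(sd.2 j))) ∧
            ((fun j => sd.1 j && !(sd.2 j)), sd.2) = (g, d))
          = Finset.univ.filter fun sd : (Fin l → Bool) × (Fin l → Bool) =>
            (fun j => sd.1 j && !(sd.2 j)) = g ∧ sd.2 = d := by
        apply Finset.filter_congr
        intro sd _
        rw [Prod.mk.injEq]
        constructor
        · rintro ⟨-, h⟩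
          exact h
        · rintro ⟨h1, h2⟩
          refine ⟨?_, h1, h2⟩
          rw [h1, h2]
          exact hc
      rw [heq, card_mu_fiber]
      by_cases hcompat : ∀ j, g j = true → d j = false
      · rw [if_pos hcompat, card_s_compat g d hcompat]
      · rw [if_neg hcompat, card_s_incompat g d]
        push_neg at hcompat
        obtain ⟨j, hj1, hj2⟩ := hcompat
        exact ⟨j, hj1, by revert hj2; cases d j <;> simp⟩
    · rw [if_neg hc, Finset.card_eq_zero, Finset.filter_eq_empty_iff]
      rintro sd -
      rintro ⟨h1, h2⟩
      rw [Prod.mk.injEq] at h2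
      exact hc (by rw [← h2.1, ← h2.2]; exact h1)
  simp only [inner]
  have innersum : ∀ g : Fin l → Bool,
      (∑ d : Fin l → Bool, if 2 * wtv g + wtv d = w ∧ P g then
          (if ∀ j, g j = true → d j = false then 2 ^ wtv d else 0) else 0)
      = if 2 * wtv g ≤ w ∧ P g then
          Nat.choose (l - wtv g) (w - 2 * wtv g) * 2 ^ (w - 2 * wtv g) else 0 := by
    intro g
    by_cases hP : P g
    · by_cases hle : 2 * wtv g ≤ w
      · rw [if_pos ⟨hle, hP⟩]
        have hterm : ∀ d : Fin l → Bool,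
            (if 2 * wtv g + wtv d = w ∧ P g then
              (if ∀ j, g j = true → d j = false then 2 ^ wtv d else 0) else 0)
            = if wtv d = w - 2 * wtv g ∧ ∀ j, g j = true → d j = false
                then 2 ^ (w - 2 * wtv g) else 0 := by
          intro d
          by_cases h1 : wtv d = w - 2 * wtv g
          · by_cases h2 : ∀ j, g j = true → d j = false
            · rw [if_pos ⟨show 2 * wtv g + wtv d = w by omega, hP⟩, if_pos h2,
                if_pos ⟨h1, h2⟩, h1]
            · rw [if_pos ⟨show 2 * wtv g + wtv d = w by omega, hP⟩, if_neg h2,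
                if_neg (by tauto)]
          · rw [if_neg (by rintro ⟨h, -⟩; exact h1 (by omega)), if_neg (by tauto)]
        rw [Finset.sum_congr rfl fun d _ => hterm d, ← Finset.sum_filter,
          Finset.sum_const, smul_eq_mul, card_d g (w - 2 * wtv g), mul_comm]
      · rw [if_neg (by tauto)]
        apply Finset.sum_eq_zero
        intro d _
        rw [if_neg (by rintro ⟨h, -⟩; omega)]
    · rw [if_neg (by tauto)]
      apply Finset.sum_eq_zero
      intro d _
      rw [if_neg (by tauto)]
  rw [Finset.sum_congr rfl fun g _ => innersum g]
  have hwt_le : ∀ x : Fin l → Bool, wtv x ≤ l := by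
    intro x
    have := Finset.card_filter_le Finset.univ (fun j => x j = true)
    simpa [wtv] using this
  rw [← Finset.sum_fiberwise_of_maps_to (g := wtv) (t := Finset.range (l + 1))
      (fun x _ => Finset.mem_range.mpr (by have := hwt_le x; omega))
      (fun g : Fin l → Bool =>
        if 2 * wtv g ≤ w ∧ P g then
          (l - wtv g).choose (w - 2 * wtv g) * 2 ^ (w - 2 * wtv g) else 0)]
  have hH : ∀ w₀, w₀ ∈ Finset.range (l + 1) →
      (∑ g ∈ Finset.univ.filter (fun g : Fin l → Bool => wtv g = w₀),
        if 2 * wtv g ≤ w ∧ P g then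
          (l - wtv g).choose (w - 2 * wtv g) * 2 ^ (w - 2 * wtv g) else 0)
      = if 2 * w₀ ≤ w then
          Nat.choose (l - w₀) (w - 2 * w₀) * 2 ^ (w - 2 * w₀) *
            (Finset.univ.filter fun g => wtv g = w₀ ∧ P g).card else 0 := by
    intro w₀ _
    by_cases h2 : 2 * w₀ ≤ w
    · rw [if_pos h2]
      have step : ∀ g ∈ Finset.univ.filter (fun g : Fin l → Bool => wtv g = w₀),
          (if 2 * wtv g ≤ w ∧ P g then
            (l - wtv g).choose (w - 2 * wtv g) * 2 ^ (w - 2 * wtv g) else 0)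
          = if P g then
              Nat.choose (l - w₀) (w - 2 * w₀) * 2 ^ (w - 2 * w₀) else 0 := by
        intro g hg
        rw [Finset.mem_filter] at hg
        rw [hg.2]
        by_cases hP : P g
        · rw [if_pos ⟨h2, hP⟩, if_pos hP]
        · rw [if_neg (by tauto), if_neg hP]
      rw [Finset.sum_congr rfl step, ← Finset.sum_filter, Finset.filter_filter,
        Finset.sum_const, smul_eq_mul, mul_comm]
    · rw [if_neg h2]
      apply Finset.sum_eq_zero
      intro g hg
      rw [Finset.mem_filter] at hg
      rw [if_neg (by rw [hg.2]; tauto)]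
  rw [Finset.sum_congr rfl hH]
  rw [← Finset.sum_subset (Finset.range_subset_range.mpr (by omega : w / 2 + 1 ≤ l + 1))
    (fun x _ hx => by
      rw [Finset.mem_range, not_lt] at hx
      rw [if_neg (by omega)])]
  apply Finset.sum_congr rfl
  intro w₀ hw₀
  rw [Finset.mem_range] at hw₀
  rw [if_pos (by omega)]

section kills
variable {l : ℕ} (T : Matrix (Fin l) (Fin l) (ZMod 2))

/-- the `mod l` map on columns -/
def jsmall {l : ℕ} (c : Fin (2 * l)) (hl : 0 < l) : Fin l :=
  if h : (c : ℕ) < l then ⟨c, h⟩ else ⟨(c : ℕ) - l, by have := c.isLt; omega⟩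

lemma kron_entry_lower (r : Fin l) (c : Fin (2 * l)) (h : 0 < l) :
    kron Ttwo T ⟨l + (r : ℕ), by have := r.isLt; omega⟩ c = T r (jsmall c h) := by
  have hrow : (finProdFinEquiv.symm (⟨l + (r : ℕ), by have := r.isLt; omega⟩ : Fin (2 * l)))
      = ((1 : Fin 2), r) := by
    rw [Equiv.symm_apply_eq]
    apply Fin.ext
    simp [finProdFinEquiv]
    omega
  by_cases hc : (c : ℕ) < l
  · have hcol : finProdFinEquiv.symm c = ((0 : Fin 2), (⟨(c : ℕ), hc⟩ : Fin l)) := by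
      rw [Equiv.symm_apply_eq]
      apply Fin.ext
      simp [finProdFinEquiv]
    rw [kron, Matrix.reindex_apply, Matrix.submatrix_apply, hrow, hcol]
    rw [Matrix.kroneckerMap_apply]
    have : Ttwo 1 0 = 1 := by decide
    rw [this, one_mul, jsmall, dif_pos hc]
  · have hcol : finProdFinEquiv.symm c
        = ((1 : Fin 2), (⟨(c : ℕ) - l, by have := c.isLt; omega⟩ : Fin l)) := by
      rw [Equiv.symm_apply_eq]
      apply Fin.ext
      simp [finProdFinEquiv]
      omega
    rw [kron, Matrix.reindex_apply, Matrix.submatrix_apply, hrow, hcol]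
    rw [Matrix.kroneckerMap_apply]
    have : Ttwo 1 1 = 1 := by decide
    rw [this, one_mul, jsmall, dif_neg hc]
end kills

section killstransfer
variable {l : ℕ} (T : Matrix (Fin l) (Fin l) (ZMod 2)) (i : Fin l)

/-- row equivalence -/
def rho (i : Fin l) : {r : Fin l // i ≤ r} ≃
    {r : Fin (2 * l) // (⟨l + (i : ℕ), by have := i.isLt; omega⟩ : Fin (2 * l)) ≤ r} where
  toFun r := ⟨⟨l + (r.val : ℕ), by have := r.val.isLt; omega⟩, by
    have hir : (i : ℕ) ≤ (r.val : ℕ) := r.2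
    rw [Fin.le_def]
    exact Nat.add_le_add_left hir l⟩
  invFun r := ⟨⟨(r.val : ℕ) - l, by have := r.val.isLt; omega⟩, by
    have h1 : l + (i : ℕ) ≤ (r.val : ℕ) := r.2
    rw [Fin.le_def]
    exact Nat.le_sub_of_add_le (by omega)⟩
  left_inv r := by
    apply Subtype.ext; apply Fin.ext
    show l + (r.val : ℕ) - l = (r.val : ℕ)
    omega
  right_inv r := by
    have h1 : l + (i : ℕ) ≤ (r.val : ℕ) := r.2
    apply Subtype.ext; apply Fin.ext
    show l + ((r.val : ℕ) - l) = (r.val : ℕ)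
    omega

lemma kills_kron_iff (e : Fin (2 * l) → Bool) :
    Kills (kron Ttwo T) ⟨l + (i : ℕ), by have := i.isLt; omega⟩ e ↔
      Kills T i (fun j => e ⟨(j : ℕ), by have := j.isLt; omega⟩ &&
        e ⟨l + (j : ℕ), by have := j.isLt; omega⟩) := by
  classical
  have hl : 0 < l := i.pos
  set bigi : Fin (2 * l) := ⟨l + (i : ℕ), by have := i.isLt; omega⟩ with hbigi
  set φ := LinearEquiv.funCongrLeft (ZMod 2) (ZMod 2) (rho i) with hφ
  have hφ_apply : ∀ f : {r : Fin (2 * l) // bigi ≤ r} → ZMod 2,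
      φ f = fun r => f (rho i r) := fun f => rfl
  set vbig : {r : Fin (2 * l) // bigi ≤ r} → ZMod 2 :=
    fun r => if r.val = bigi then (1 : ZMod 2) else 0 with hvbig
  set vsmall : {r : Fin l // i ≤ r} → ZMod 2 :=
    fun r => if r.val = i then (1 : ZMod 2) else 0 with hvsmall
  set Sbig : Set ({r : Fin (2 * l) // bigi ≤ r} → ZMod 2) :=
    {w | ∃ j : Fin (2 * l), e j = false ∧ w = fun r => kron Ttwo T r.val j} with hSbig
  set Ssmall : Set ({r : Fin l // i ≤ r} → ZMod 2) :=
    {w | ∃ j : Fin l, (e ⟨(j : ℕ), by have := j.isLt; omega⟩ &&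
      e ⟨l + (j : ℕ), by have := j.isLt; omega⟩) = false ∧ w = fun r => T r.val j} with hSsmall
  have hv : φ vbig = vsmall := by
    funext r
    rw [hφ_apply]
    simp only [hvbig, hvsmall]
    have : ((rho i r).val = bigi) ↔ (r.val = i) := by
      constructor
      · intro h
        apply Fin.ext
        have := congrArg Fin.val h
        simp [rho, hbigi] at this ⊢
        omega
      · intro h
        apply Fin.ext
        simp [rho, hbigi, h]
    by_cases h : r.val = i
    · rw [if_pos h, if_pos (this.mpr h)]
    · rw [if_neg h, if_neg (fun hh => h (this.mp hh))]
  have himg : φ '' Sbig = Ssmall := by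
    ext v
    constructor
    · rintro ⟨u, ⟨j, hj, hu⟩, rfl⟩
      refine ⟨jsmall j hl, ?_, ?_⟩
      · by_cases hc : (j : ℕ) < l
        · have : (⟨(jsmall j hl : ℕ), by have := (jsmall j hl).isLt; omega⟩ : Fin (2 * l)) = j := by
            apply Fin.ext
            simp [jsmall, dif_pos hc]
          rw [this, hj, Bool.false_and]
        · have : (⟨l + ((jsmall j hl) : ℕ), by have := (jsmall j hl).isLt; omega⟩ : Fin (2 * l)) = j := by
            apply Fin.ext
            have := j.isLt
            simp [jsmall, dif_neg hc]
            omega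
          rw [this, hj, Bool.and_false]
      · rw [hφ_apply, hu]
        funext r
        exact kron_entry_lower T r.val j hl
    · rintro ⟨j, hj, rfl⟩
      rw [Bool.and_eq_false_iff] at hj
      rcases hj with hj | hj
      · refine ⟨fun r => kron Ttwo T r.val ⟨(j : ℕ), by have := j.isLt; omega⟩,
          ⟨⟨(j : ℕ), by have := j.isLt; omega⟩, hj, rfl⟩, ?_⟩
        rw [hφ_apply]
        funext r
        have h1 := kron_entry_lower T r.val
          (⟨(j : ℕ), by have := j.isLt; omega⟩ : Fin (2 * l)) hl
        have h2 : jsmall (⟨(j : ℕ), by have := j.isLt; omega⟩ : Fin (2 * l)) hl = j := by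
          apply Fin.ext
          simp [jsmall, j.isLt]
        rw [h2] at h1
        exact h1
      · refine ⟨fun r => kron Ttwo T r.val ⟨l + (j : ℕ), by have := j.isLt; omega⟩,
          ⟨⟨l + (j : ℕ), by have := j.isLt; omega⟩, hj, rfl⟩, ?_⟩
        rw [hφ_apply]
        funext r
        have h1 := kron_entry_lower T r.val
          (⟨l + (j : ℕ), by have := j.isLt; omega⟩ : Fin (2 * l)) hl
        have h2 : jsmall (⟨l + (j : ℕ), by have := j.isLt; omega⟩ : Fin (2 * l)) hl = j := by
          apply Fin.ext
          simp [jsmall]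
        rw [h2] at h1
        exact h1
  unfold Kills
  rw [show (fun r : {r : Fin (2*l) // bigi ≤ r} => if r.val = bigi then (1 : ZMod 2) else 0)
    = vbig from rfl]
  have h1 : φ.symm vsmall = vbig := by rw [← hv, LinearEquiv.symm_apply_apply]
  have key : vsmall ∈ Submodule.span (ZMod 2) Ssmall ↔
      vbig ∈ Submodule.span (ZMod 2) Sbig := by
    rw [← himg, show ⇑φ '' Sbig = ⇑(φ : _ →ₗ[ZMod 2] _) '' Sbig from rfl,
      ← Submodule.map_span]
    constructor
    · rintro ⟨u, hu, huv⟩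
      rw [LinearEquiv.coe_coe] at huv
      have : u = vbig := by
        rw [← h1, ← huv, LinearEquiv.symm_apply_apply]
      rwa [this] at hu
    · intro hb
      exact ⟨vbig, hb, hv⟩
  constructor
  · exact fun h hmem => h (key.mp hmem)
  · exact fun h hmem => h (key.mpr hmem)

end killstransfer

section assemble
variable {l : ℕ}

/-- split/reparametrize equiv -/
def psi (l : ℕ) : (Fin (2 * l) → Bool) ≃ ((Fin l → Bool) × (Fin l → Bool)) where
  toFun e := (fun j => e ⟨(j : ℕ), by have := j.isLt; omega⟩,
    fun j => xor (e ⟨(j : ℕ), by have := j.isLt; omega⟩)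
      (e ⟨l + (j : ℕ), by have := j.isLt; omega⟩))
  invFun sd := fun k => if h : (k : ℕ) < l then sd.1 ⟨(k : ℕ), h⟩
    else xor (sd.1 ⟨(k : ℕ) - l, by have := k.isLt; omega⟩)
      (sd.2 ⟨(k : ℕ) - l, by have := k.isLt; omega⟩)
  left_inv e := by
    funext k
    dsimp only
    by_cases h : (k : ℕ) < l
    · rw [dif_pos h]
    · rw [dif_neg h]
      have hk2 : (⟨l + ((k : ℕ) - l), by have := k.isLt; omega⟩ : Fin (2 * l)) = k := by
        apply Fin.ext
        have := k.isLt
        simp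
        omega
      rw [hk2, ← Bool.xor_assoc, Bool.xor_self, Bool.false_xor]
  right_inv sd := by
    apply Prod.ext
    · funext j
      dsimp only
      rw [dif_pos j.isLt]
    · funext j
      dsimp only
      rw [dif_pos j.isLt]
      have hnl : ¬ ((⟨l + (j : ℕ), by have := j.isLt; omega⟩ : Fin (2 * l)) : ℕ) < l := by
        simp
      rw [dif_neg hnl]
      have h1 : (((⟨l + (j : ℕ), by have := j.isLt; omega⟩ : Fin (2 * l)) : ℕ) - l) = (j : ℕ) := by
        simp
      have hj : ∀ (m : Fin l → Bool), m ⟨((⟨l + (j : ℕ), by have := j.isLt; omega⟩ :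
          Fin (2 * l)) : ℕ) - l, by have := j.isLt; omega⟩ = m j := by
        intro m
        congr 1
        apply Fin.ext
        simp
      rw [hj sd.1, hj sd.2, ← Bool.xor_assoc, Bool.xor_self, Bool.false_xor]

lemma bool_wt (a b : Bool) :
    a.toNat + b.toNat = 2 * (a && !(xor a b)).toNat + (xor a b).toNat := by cases a <;> cases b <;> rfl

lemma wtv_psi (e : Fin (2 * l) → Bool) :
    wtv e = 2 * wtv (fun j => (psi l e).1 j && !((psi l e).2 j)) + wtv ((psi l e).2) := by
  rw [wtv_eq_sum, wtv_eq_sum, wtv_eq_sum]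
  rw [← Fintype.sum_equiv finProdFinEquiv (fun p : Fin 2 × Fin l => (e (finProdFinEquiv p)).toNat)
    (fun k : Fin (2 * l) => (e k).toNat) (fun p => rfl)]
  rw [Fintype.sum_prod_type, Fin.sum_univ_two, Finset.mul_sum, ← Finset.sum_add_distrib]
  have h0 : ∀ j : Fin l, finProdFinEquiv ((0 : Fin 2), j)
      = (⟨(j : ℕ), by have := j.isLt; omega⟩ : Fin (2 * l)) := by
    intro j; apply Fin.ext; simp [finProdFinEquiv]
  have h1 : ∀ j : Fin l, finProdFinEquiv ((1 : Fin 2), j)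
      = (⟨l + (j : ℕ), by have := j.isLt; omega⟩ : Fin (2 * l)) := by
    intro j; apply Fin.ext; simp [finProdFinEquiv]; omega
  conv_rhs => rw [← Finset.sum_add_distrib]
  apply Finset.sum_congr rfl
  intro j _
  rw [h0 j, h1 j]
  exact bool_wt _ _

end assemble

lemma bool_and_eq (a b : Bool) : (a && b) = (a && !(xor a b)) := by
  cases a <;> cases b <;> rfl

theorem numKilling_kron_lowerHalf {l : ℕ} (T : Matrix (Fin l) (Fin l) (ZMod 2))
    (i : Fin l) (w : ℕ) (hw : w ≤ 2 * l) :
    numKilling (kron Ttwo T) ⟨l + (i : ℕ), by have := i.isLt; omega⟩ w =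
      ∑ w₀ ∈ Finset.range (w / 2 + 1),
        Nat.choose (l - w₀) (w - 2 * w₀) * 2 ^ (w - 2 * w₀) * numKilling T i w₀ := by
  classical
  have hnk : ∀ w₀, numKilling T i w₀
      = (Finset.univ.filter fun g : Fin l → Bool => wtv g = w₀ ∧ Kills T i g).card := by
    intro w₀
    rw [numKilling, Nat.card_eq_fintype_card, Fintype.card_subtype]
    apply congrArg Finset.card
    apply Finset.filter_congr
    intro g _
    rw [wtv]
  have hiff : ∀ e : Fin (2 * l) → Bool,
      ((Finset.univ.filter fun j => e j = true).card = w ∧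
        Kills (kron Ttwo T) ⟨l + (i : ℕ), by have := i.isLt; omega⟩ e) ↔
      (2 * wtv (fun j => (psi l e).1 j && !((psi l e).2 j)) + wtv ((psi l e).2) = w ∧
        Kills T i (fun j => (psi l e).1 j && !((psi l e).2 j))) := by
    intro e
    have hwteq : (Finset.univ.filter fun j => e j = true).card
        = 2 * wtv (fun j => (psi l e).1 j && !((psi l e).2 j)) + wtv ((psi l e).2) := by
      rw [← wtv_psi e]; rfl
    have hfun : (fun j : Fin l => e ⟨(j : ℕ), by have := j.isLt; omega⟩ &&
        e ⟨l + (j : ℕ), by have := j.isLt; omega⟩)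
        = fun j => (psi l e).1 j && !((psi l e).2 j) := by
      funext j
      exact bool_and_eq _ _
    rw [hwteq, kills_kron_iff T i e, hfun]
  have hbig : numKilling (kron Ttwo T) ⟨l + (i : ℕ), by have := i.isLt; omega⟩ w
      = (Finset.univ.filter fun sd : (Fin l → Bool) × (Fin l → Bool) =>
          2 * wtv (fun j => sd.1 j && !(sd.2 j)) + wtv sd.2 = w ∧
            Kills T i (fun j => sd.1 j && !(sd.2 j))).card := by
    rw [numKilling, Nat.card_congr (Equiv.subtypeEquiv
      (q := fun sd : (Fin l → Bool) × (Fin l → Bool) =>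
        2 * wtv (fun j => sd.1 j && !(sd.2 j)) + wtv sd.2 = w ∧
          Kills T i (fun j => sd.1 j && !(sd.2 j))) (psi l) hiff),
      Nat.card_eq_fintype_card, Fintype.card_subtype]
  rw [hbig, main_count (Kills T i) w hw]
  exact Finset.sum_congr rfl fun w₀ _ => by rw [hnk w₀]
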